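/- arXiv:2605.15356 — 6 statements merged into one kernel-verified Lean document; each statement's English description precedes it below -/
import Mathlib

section
/- Let (Ω, 𝒜, μ) be a σ-finite measure space, let p, q : Ω → [0,∞) be measurable with q(u) > 0 for μ-a.e. u with p(u) > 0, and suppose the likelihood-ratio control ∫ p(u)² / q(u) dμ(u) ≤ C holds for some finite C > 0. Then for any measurable functions g, ĝ : Ω → ℝ and any σ > 0, ∫ |Φ(-g(u)/σ) - Φ(-ĝ(u)/σ)| · p(u) dμ(u) ≤ (√C / (σ √(2π))) · ( ∫ (g(u) - ĝ(u))² q(u) dμ(u) )^{1/2}. -/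
open MeasureTheory Set

/-- The standard normal cumulative distribution function
`Φ(x) = (1/√(2π)) ∫_{-∞}^{x} e^{-t²/2} dt`. -/
noncomputable def stdNormalCDF (x : ℝ) : ℝ :=
  (Real.sqrt (2 * Real.pi))⁻¹ * ∫ t in Set.Iic x, Real.exp (-t ^ 2 / 2)

lemma integrable_exp_neg_sq_half : Integrable (fun t : ℝ => Real.exp (-t ^ 2 / 2)) := by
  have h := integrable_exp_neg_mul_sq (by norm_num : (0:ℝ) < 1/2)
  exact h.congr (Filter.Eventually.of_forall fun x => congrArg Real.exp (by ring))

lemma stdNormalCDF_lipschitz (a b : ℝ) :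
    |stdNormalCDF a - stdNormalCDF b| ≤ |a - b| / Real.sqrt (2 * Real.pi) := by
  have hIic : ∀ x : ℝ, IntegrableOn (fun t : ℝ => Real.exp (-t ^ 2 / 2)) (Iic x) :=
    fun x => integrable_exp_neg_sq_half.integrableOn
  unfold stdNormalCDF
  rw [← mul_sub, abs_mul, abs_inv, abs_of_nonneg (Real.sqrt_nonneg _),
    intervalIntegral.integral_Iic_sub_Iic (hIic b) (hIic a)]
  have hbound : |∫ t in b..a, Real.exp (-t ^ 2 / 2)| ≤ 1 * |a - b| := by
    rw [← Real.norm_eq_abs]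
    apply intervalIntegral.norm_integral_le_of_norm_le_const
    intro x _
    rw [Real.norm_eq_abs, abs_of_nonneg (Real.exp_nonneg _)]
    apply Real.exp_le_one_iff.mpr
    have : (0:ℝ) ≤ x ^ 2 := sq_nonneg x
    linarith
  calc (Real.sqrt (2 * Real.pi))⁻¹ * |∫ t in b..a, Real.exp (-t ^ 2 / 2)|
      ≤ (Real.sqrt (2 * Real.pi))⁻¹ * (1 * |a - b|) := by
        apply mul_le_mul_of_nonneg_left hbound (inv_nonneg.mpr (Real.sqrt_nonneg _))
    _ = |a - b| / Real.sqrt (2 * Real.pi) := by rw [one_mul, inv_mul_eq_div]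

/-- Weighted `L¹` bound on the difference of the true and surrogate soft importance
functions: under the likelihood-ratio control `∫ p²/q dμ ≤ C`,
`∫ |Φ(-g/σ) - Φ(-gHat/σ)| p dμ ≤ (√C / (σ √(2π))) (∫ (g - gHat)² q dμ)^{1/2}`. -/
theorem soft_indicator_weighted_L1_bound
    {Ω : Type*} [MeasurableSpace Ω] (μ : Measure Ω) [SigmaFinite μ]
    (p q g gHat : Ω → ℝ)
    (hp : Measurable p) (hq : Measurable q) (hg : Measurable g) (hgHat : Measurable gHat)
    (hp0 : ∀ u, 0 ≤ p u) (hq0 : ∀ u, 0 ≤ q u)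
    (hqpos : ∀ᵐ u ∂μ, 0 < p u → 0 < q u)
    (C : ℝ) (hC : 0 < C)
    (hLRint : Integrable (fun u => (p u) ^ 2 / q u) μ)
    (hLR : ∫ u, (p u) ^ 2 / q u ∂μ ≤ C)
    (σ : ℝ) (hσ : 0 < σ)
    (hErrInt : Integrable (fun u => (g u - gHat u) ^ 2 * q u) μ) :
    ∫ u, |stdNormalCDF (-(g u) / σ) - stdNormalCDF (-(gHat u) / σ)| * p u ∂μ
      ≤ (Real.sqrt C / (σ * Real.sqrt (2 * Real.pi)))
          * Real.sqrt (∫ u, (g u - gHat u) ^ 2 * q u ∂μ) := by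
  set s := Real.sqrt (2 * Real.pi) with hs_def
  have hs_pos : 0 < s := Real.sqrt_pos.mpr (by positivity)
  set c : ℝ := (σ * s)⁻¹ with hc_def
  have hc_nonneg : 0 ≤ c := by positivity
  set F : Ω → ℝ := fun u => |g u - gHat u| * Real.sqrt (q u) with hF_def
  set G : Ω → ℝ := fun u => p u / Real.sqrt (q u) with hG_def
  have hFmeas : Measurable F := ((hg.sub hgHat).abs).mul hq.sqrt
  have hGmeas : Measurable G := hp.div hq.sqrt
  have hFsq : ∀ u, F u ^ 2 = (g u - gHat u) ^ 2 * q u := by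
    intro u
    rw [hF_def]
    rw [mul_pow, sq_abs, Real.sq_sqrt (hq0 u)]
  have hGsq : ∀ u, G u ^ 2 = p u ^ 2 / q u := by
    intro u
    rw [hG_def]
    rw [div_pow, Real.sq_sqrt (hq0 u)]
  have hF2 : MemLp F 2 μ := by
    rw [memLp_two_iff_integrable_sq hFmeas.aestronglyMeasurable]
    exact hErrInt.congr (Filter.Eventually.of_forall fun u => (hFsq u).symm)
  have hG2 : MemLp G 2 μ := by
    rw [memLp_two_iff_integrable_sq hGmeas.aestronglyMeasurable]
    exact hLRint.congr (Filter.Eventually.of_forall fun u => (hGsq u).symm)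
  have hFG_int : Integrable (fun u => F u * G u) μ := by
    have h := hF2.smul (r := 1) hG2
    have h' := memLp_one_iff_integrable.mp h
    exact h'.congr (Filter.Eventually.of_forall fun u => mul_comm (G u) (F u))
  -- a.e. equality of |g - gHat| * p with F * G
  have hae : ∀ᵐ u ∂μ, |g u - gHat u| * p u = F u * G u := by
    filter_upwards [hqpos] with u hu
    rcases eq_or_lt_of_le (hp0 u) with hpu | hpu
    · simp [hF_def, hG_def, ← hpu]
    · have hqu : 0 < q u := hu hpu
      have hsq : Real.sqrt (q u) ≠ 0 := ne_of_gt (Real.sqrt_pos.mpr hqu)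
      rw [hF_def, hG_def]
      field_simp
  -- pointwise a.e. bound
  have hptwise : ∀ᵐ u ∂μ,
      |stdNormalCDF (-(g u) / σ) - stdNormalCDF (-(gHat u) / σ)| * p u ≤ c * (F u * G u) := by
    filter_upwards [hae] with u hu
    have h1 : |stdNormalCDF (-(g u) / σ) - stdNormalCDF (-(gHat u) / σ)| * p u
        ≤ (|(-(g u) / σ) - (-(gHat u) / σ)| / s) * p u :=
      mul_le_mul_of_nonneg_right (stdNormalCDF_lipschitz _ _) (hp0 u)
    have h2 : |(-(g u) / σ) - (-(gHat u) / σ)| = |g u - gHat u| / σ := by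
      have : (-(g u) / σ) - (-(gHat u) / σ) = (gHat u - g u) / σ := by ring
      rw [this, abs_div, abs_of_pos hσ, abs_sub_comm]
    have h3 : (|g u - gHat u| / σ / s) * p u = c * (|g u - gHat u| * p u) := by
      rw [hc_def]
      field_simp
    calc |stdNormalCDF (-(g u) / σ) - stdNormalCDF (-(gHat u) / σ)| * p u
        ≤ (|(-(g u) / σ) - (-(gHat u) / σ)| / s) * p u := h1
      _ = c * (|g u - gHat u| * p u) := by rw [h2, h3]
      _ = c * (F u * G u) := by rw [hu]
  -- integrate
  have hmono : ∫ u, |stdNormalCDF (-(g u) / σ) - stdNormalCDF (-(gHat u) / σ)| * p u ∂μ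
      ≤ ∫ u, c * (F u * G u) ∂μ := by
    apply integral_mono_of_nonneg
    · exact Filter.Eventually.of_forall fun u => mul_nonneg (abs_nonneg _) (hp0 u)
    · exact hFG_int.const_mul c
    · exact hptwise
  have hCS : ∫ u, F u * G u ∂μ
      ≤ Real.sqrt (∫ u, F u ^ 2 ∂μ) * Real.sqrt (∫ u, G u ^ 2 ∂μ) := by
    have hconj : Real.HolderConjugate 2 2 := Real.HolderConjugate.two_two
    have hF2' : MemLp F (ENNReal.ofReal 2) μ := by
      convert hF2 using 2; simp
    have hG2' : MemLp G (ENNReal.ofReal 2) μ := by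
      convert hG2 using 2; simp
    have h := integral_mul_le_Lp_mul_Lq_of_nonneg hconj
      (Filter.Eventually.of_forall fun u => by
        exact mul_nonneg (abs_nonneg _) (Real.sqrt_nonneg _))
      (Filter.Eventually.of_forall fun u => by
        exact div_nonneg (hp0 u) (Real.sqrt_nonneg _))
      hF2' hG2'
    have e1 : ∀ (f : Ω → ℝ), (∫ u, f u ^ (2:ℝ) ∂μ) ^ (1/(2:ℝ))
        = Real.sqrt (∫ u, f u ^ 2 ∂μ) := by
      intro f
      rw [Real.sqrt_eq_rpow]
      congr 1
      exact integral_congr_ae (Filter.Eventually.of_forall fun u => Real.rpow_two (f u))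
    rw [e1 F, e1 G] at h
    exact h
  have hBle : Real.sqrt (∫ u, G u ^ 2 ∂μ) ≤ Real.sqrt C := by
    apply Real.sqrt_le_sqrt
    calc ∫ u, G u ^ 2 ∂μ = ∫ u, p u ^ 2 / q u ∂μ :=
          integral_congr_ae (Filter.Eventually.of_forall fun u => hGsq u)
      _ ≤ C := hLR
  have hAeq : ∫ u, F u ^ 2 ∂μ = ∫ u, (g u - gHat u) ^ 2 * q u ∂μ :=
    integral_congr_ae (Filter.Eventually.of_forall fun u => hFsq u)
  calc ∫ u, |stdNormalCDF (-(g u) / σ) - stdNormalCDF (-(gHat u) / σ)| * p u ∂μ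
      ≤ ∫ u, c * (F u * G u) ∂μ := hmono
    _ = c * ∫ u, F u * G u ∂μ := integral_const_mul c _
    _ ≤ c * (Real.sqrt (∫ u, F u ^ 2 ∂μ) * Real.sqrt (∫ u, G u ^ 2 ∂μ)) := by
        apply mul_le_mul_of_nonneg_left hCS hc_nonneg
    _ ≤ c * (Real.sqrt (∫ u, F u ^ 2 ∂μ) * Real.sqrt C) := by
        apply mul_le_mul_of_nonneg_left
          (mul_le_mul_of_nonneg_left hBle (Real.sqrt_nonneg _)) hc_nonneg
    _ = (Real.sqrt C / (σ * s)) * Real.sqrt (∫ u, (g u - gHat u) ^ 2 * q u ∂μ) := by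
        rw [hAeq, hc_def, div_eq_mul_inv]
        ring
end

section
/- Let (Ω, 𝒜, μ) be a σ-finite measure space, let p : Ω → [0,∞) be measurable, and let h₁, h₂ : Ω → [0,∞) be measurable functions such that Z₁ := ∫ h₁ p dμ and Z₂ := ∫ h₂ p dμ satisfy 0 < Zᵢ < ∞ for i = 1,2, and such that ∫ |h₁ - h₂| p dμ < ∞. Then the L¹ distance between the normalized densities satisfies ∫ | h₁(u) p(u) / Z₁ - h₂(u) p(u) / Z₂ | dμ(u) ≤ (2 / Z₁) ∫ |h₁(u) - h₂(u)| p(u) dμ(u). -/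
open MeasureTheory Set

/-- Normalization inequality for unnormalized probability densities: given a base
weight `p ≥ 0` and two nonnegative importance functions `h₁, h₂` with normalizing
constants `Zᵢ = ∫ hᵢ p dμ ∈ (0, ∞)` and `∫ |h₁ - h₂| p dμ < ∞`, the normalized
densities satisfy `∫ |h₁ p / Z₁ - h₂ p / Z₂| dμ ≤ (2 / Z₁) ∫ |h₁ - h₂| p dμ`. -/
theorem normalized_density_L1_bound
    {Ω : Type*} [MeasurableSpace Ω] (μ : Measure Ω) [SigmaFinite μ]
    (p h₁ h₂ : Ω → ℝ)
    (hp : Measurable p) (hm1 : Measurable h₁) (hm2 : Measurable h₂)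
    (hp0 : ∀ u, 0 ≤ p u) (h10 : ∀ u, 0 ≤ h₁ u) (h20 : ∀ u, 0 ≤ h₂ u)
    (hint1 : Integrable (fun u => h₁ u * p u) μ)
    (hint2 : Integrable (fun u => h₂ u * p u) μ)
    (hZ1 : 0 < ∫ u, h₁ u * p u ∂μ)
    (hZ2 : 0 < ∫ u, h₂ u * p u ∂μ)
    (hdiff : Integrable (fun u => |h₁ u - h₂ u| * p u) μ) :
    ∫ u, |h₁ u * p u / (∫ v, h₁ v * p v ∂μ) - h₂ u * p u / (∫ v, h₂ v * p v ∂μ)| ∂μ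
      ≤ (2 / (∫ v, h₁ v * p v ∂μ)) * ∫ u, |h₁ u - h₂ u| * p u ∂μ := by
  set Z1 := ∫ v, h₁ v * p v ∂μ with hZ1def
  set Z2 := ∫ v, h₂ v * p v ∂μ with hZ2def
  set D := ∫ u, |h₁ u - h₂ u| * p u ∂μ with hDdef
  have hZ1ne : Z1 ≠ 0 := ne_of_gt hZ1
  have hZ2ne : Z2 ≠ 0 := ne_of_gt hZ2
  have hD0 : 0 ≤ D := integral_nonneg fun u => mul_nonneg (abs_nonneg _) (hp0 u)
  have hZdiff : |Z2 - Z1| ≤ D := by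
    have h1 : Z2 - Z1 = ∫ u, (h₂ u - h₁ u) * p u ∂μ := by
      rw [hZ2def, hZ1def, ← integral_sub hint2 hint1]
      congr 1; funext u; ring
    rw [h1]
    calc |∫ u, (h₂ u - h₁ u) * p u ∂μ| ≤ ∫ u, |(h₂ u - h₁ u) * p u| ∂μ :=
          by simpa [Real.norm_eq_abs, abs_mul] using norm_integral_le_integral_norm (μ := μ) fun u => (h₂ u - h₁ u) * p u
      _ = D := by
          rw [hDdef]; congr 1; funext u
          rw [abs_mul, abs_of_nonneg (hp0 u), abs_sub_comm]
  have hg : Integrable (fun u => |h₁ u - h₂ u| * p u / Z1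
      + h₂ u * p u * |1/Z1 - 1/Z2|) μ :=
    (hdiff.div_const Z1).add (hint2.mul_const _)
  have hpt : ∀ u, |h₁ u * p u / Z1 - h₂ u * p u / Z2|
      ≤ |h₁ u - h₂ u| * p u / Z1 + h₂ u * p u * |1/Z1 - 1/Z2| := by
    intro u
    have heq : h₁ u * p u / Z1 - h₂ u * p u / Z2
        = (h₁ u - h₂ u) * p u / Z1 + h₂ u * p u * (1/Z1 - 1/Z2) := by
      field_simp; ring
    rw [heq]
    calc |(h₁ u - h₂ u) * p u / Z1 + h₂ u * p u * (1/Z1 - 1/Z2)|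
        ≤ |(h₁ u - h₂ u) * p u / Z1| + |h₂ u * p u * (1/Z1 - 1/Z2)| := abs_add_le _ _
      _ = |h₁ u - h₂ u| * p u / Z1 + h₂ u * p u * |1/Z1 - 1/Z2| := by
          rw [abs_div, abs_mul, abs_mul, abs_of_nonneg (hp0 u),
            abs_of_nonneg (mul_nonneg (h20 u) (hp0 u)), abs_of_pos hZ1]
  have hmain : ∫ u, |h₁ u * p u / Z1 - h₂ u * p u / Z2| ∂μ
      ≤ ∫ u, (|h₁ u - h₂ u| * p u / Z1 + h₂ u * p u * |1/Z1 - 1/Z2|) ∂μ :=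
    integral_mono_of_nonneg (Filter.Eventually.of_forall fun u => abs_nonneg _) hg
      (Filter.Eventually.of_forall hpt)
  have hsplit : ∫ u, (|h₁ u - h₂ u| * p u / Z1 + h₂ u * p u * |1/Z1 - 1/Z2|) ∂μ
      = D / Z1 + Z2 * |1/Z1 - 1/Z2| := by
    rw [integral_add (hdiff.div_const Z1) (hint2.mul_const _), integral_div,
      integral_mul_const]
  have hZ2term : Z2 * |1/Z1 - 1/Z2| = |Z2 - Z1| / Z1 := by
    have : 1/Z1 - 1/Z2 = (Z2 - Z1) / (Z1 * Z2) := by field_simp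
    rw [this, abs_div, abs_of_pos (mul_pos hZ1 hZ2)]
    field_simp
  have hfin : |Z2 - Z1| / Z1 ≤ D / Z1 := by gcongr
  calc ∫ u, |h₁ u * p u / Z1 - h₂ u * p u / Z2| ∂μ
      ≤ D / Z1 + Z2 * |1/Z1 - 1/Z2| := by rw [← hsplit]; exact hmain
    _ = D / Z1 + |Z2 - Z1| / Z1 := by rw [hZ2term]
    _ ≤ D / Z1 + D / Z1 := by linarith
    _ = (2 / Z1) * D := by ring
end

section
/- Let ν be a probability measure on ℝ^d, let g, ĝ : ℝ^d → ℝ be measurable, and define the misclassification set M = { u : the conditions g(u) ≤ 0 and ĝ(u) ≤ 0 do not both hold or both fail } (i.e., 𝟙_{g(u)≤0} ≠ 𝟙_{ĝ(u)≤0}). Suppose the margin condition ν({u : |g(u)| ≤ τ}) ≤ C_m τ^κ holds for all 0 < τ ≤ τ₀, with constants C_m > 0, κ > 0, τ₀ > 0. Let ε = ( ∫ (g - ĝ)² dν )^{1/2}. Then for every τ with 0 < τ ≤ τ₀, ν(M) ≤ C_m τ^κ + ε² / τ². -/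
open MeasureTheory Set

/-- Split bound for the surrogate-induced misclassification set: under the margin
condition `ν(|g| ≤ τ) ≤ C_m τ^κ` for `0 < τ ≤ τ₀`, the set `M` where the failure
indicators `𝟙_{g≤0}` and `𝟙_{ĝ≤0}` disagree satisfies, with
`ε = (∫ (g - ĝ)² dν)^{1/2}`, the bound `ν(M) ≤ C_m τ^κ + ε²/τ²` for all
`0 < τ ≤ τ₀`. -/
theorem misclassification_split_bound
    (d : ℕ) (ν : Measure (Fin d → ℝ)) [IsProbabilityMeasure ν]
    (g gHat : (Fin d → ℝ) → ℝ)
    (hg : Measurable g) (hgHat : Measurable gHat)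
    (Cm κ τ₀ : ℝ) (hCm : 0 < Cm) (hκ : 0 < κ) (hτ₀ : 0 < τ₀)
    (hmargin : ∀ τ : ℝ, 0 < τ → τ ≤ τ₀ → (ν {u | |g u| ≤ τ}).toReal ≤ Cm * τ ^ κ)
    (hInt : Integrable (fun u => (g u - gHat u) ^ 2) ν)
    (τ : ℝ) (hτ : 0 < τ) (hττ₀ : τ ≤ τ₀) :
    (ν {u | (g u ≤ 0) ≠ (gHat u ≤ 0)}).toReal
      ≤ Cm * τ ^ κ
        + (Real.sqrt (∫ u, (g u - gHat u) ^ 2 ∂ν)) ^ 2 / τ ^ 2 := by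
  set A : Set (Fin d → ℝ) := {u | |g u| ≤ τ}
  set B : Set (Fin d → ℝ) := {u | τ ^ 2 ≤ (g u - gHat u) ^ 2}
  have hsub : {u | (g u ≤ 0) ≠ (gHat u ≤ 0)} ⊆ A ∪ B := by
    intro u hu
    have hkey : |g u| ≤ |g u - gHat u| := by
      simp only [mem_setOf_eq, ne_eq] at hu
      rcases le_or_gt (g u) 0 with h1 | h1 <;> rcases le_or_gt (gHat u) 0 with h2 | h2
      · exact absurd (by simp [h1, h2]) hu
      · rw [abs_of_nonpos h1, abs_of_nonpos (by linarith)]; linarith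
      · rw [abs_of_pos h1, abs_of_nonneg (by linarith)]; linarith
      · exact absurd (by simp [not_le.mpr h1, not_le.mpr h2]) hu
    rcases le_or_gt (|g u - gHat u|) τ with h | h
    · exact Or.inl (le_trans hkey h)
    · refine Or.inr ?_
      have : τ ≤ |g u - gHat u| := h.le
      calc τ ^ 2 ≤ |g u - gHat u| ^ 2 := by
            exact pow_le_pow_left₀ hτ.le this 2
        _ = (g u - gHat u) ^ 2 := sq_abs _
  have hle : ν {u | (g u ≤ 0) ≠ (gHat u ≤ 0)} ≤ ν A + ν B :=
    le_trans (measure_mono hsub) (measure_union_le A B)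
  have hfin : ∀ s : Set (Fin d → ℝ), ν s ≠ ⊤ := fun s => measure_ne_top ν s
  have htoReal : (ν {u | (g u ≤ 0) ≠ (gHat u ≤ 0)}).toReal ≤ (ν A).toReal + (ν B).toReal := by
    rw [← ENNReal.toReal_add (hfin A) (hfin B)]
    exact ENNReal.toReal_mono (by simp [ENNReal.add_ne_top, hfin A, hfin B]) hle
  have hA : (ν A).toReal ≤ Cm * τ ^ κ := hmargin τ hτ hττ₀
  have hB : (ν B).toReal ≤ (∫ u, (g u - gHat u) ^ 2 ∂ν) / τ ^ 2 := by
    have hτ2 : 0 < τ ^ 2 := by positivity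
    have := mul_meas_ge_le_integral_of_nonneg
      (μ := ν) (f := fun u => (g u - gHat u) ^ 2)
      (Filter.Eventually.of_forall fun u => sq_nonneg _) hInt (τ ^ 2)
    rw [← le_div_iff₀' hτ2] at this
    exact this
  have hsq : (Real.sqrt (∫ u, (g u - gHat u) ^ 2 ∂ν)) ^ 2 = ∫ u, (g u - gHat u) ^ 2 ∂ν :=
    Real.sq_sqrt (integral_nonneg fun u => sq_nonneg _)
  rw [hsq]
  linarith
end

section
/- Let ν be a probability measure on ℝ^d, let g, ĝ : ℝ^d → ℝ be measurable, define M = { u : 𝟙_{g(u)≤0} ≠ 𝟙_{ĝ(u)≤0} }, and suppose the margin condition ν({u : |g(u)| ≤ τ}) ≤ C_m τ^κ holds for all 0 < τ ≤ τ₀, with constants C_m > 0, κ > 0, τ₀ > 0. Let ε = ( ∫ (g - ĝ)² dν )^{1/2} and assume 0 < ε^{2/(κ+2)} ≤ τ₀. Then ν(M) ≤ (C_m + 1) · ε^{2κ/(κ+2)}. -/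
open MeasureTheory Set

/-- Surrogate-induced event misclassification lemma: under the margin condition
`ν(|g| ≤ τ) ≤ C_m τ^κ` for `0 < τ ≤ τ₀`, with local surrogate error
`ε = (∫ (g - ĝ)² dν)^{1/2}` satisfying `0 < ε^{2/(κ+2)} ≤ τ₀`, the set `M` where
the failure indicators `𝟙_{g≤0}` and `𝟙_{ĝ≤0}` disagree satisfies
`ν(M) ≤ (C_m + 1) ε^{2κ/(κ+2)}`. -/
theorem surrogate_misclassification_bound
    (d : ℕ) (ν : Measure (Fin d → ℝ)) [IsProbabilityMeasure ν]
    (g gHat : (Fin d → ℝ) → ℝ)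
    (hg : Measurable g) (hgHat : Measurable gHat)
    (Cm κ τ₀ : ℝ) (hCm : 0 < Cm) (hκ : 0 < κ) (hτ₀ : 0 < τ₀)
    (hmargin : ∀ τ : ℝ, 0 < τ → τ ≤ τ₀ → (ν {u | |g u| ≤ τ}).toReal ≤ Cm * τ ^ κ)
    (hInt : Integrable (fun u => (g u - gHat u) ^ 2) ν)
    (hεpos : 0 < (Real.sqrt (∫ u, (g u - gHat u) ^ 2 ∂ν)) ^ (2 / (κ + 2)))
    (hετ₀ : (Real.sqrt (∫ u, (g u - gHat u) ^ 2 ∂ν)) ^ (2 / (κ + 2)) ≤ τ₀) :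
    (ν {u | (g u ≤ 0) ≠ (gHat u ≤ 0)}).toReal
      ≤ (Cm + 1)
          * (Real.sqrt (∫ u, (g u - gHat u) ^ 2 ∂ν)) ^ (2 * κ / (κ + 2)) := by
  set I := ∫ u, (g u - gHat u) ^ 2 ∂ν with hI
  have hInonneg : 0 ≤ I := integral_nonneg fun u => sq_nonneg _
  set ε := Real.sqrt I with hε
  have hεnn : 0 ≤ ε := Real.sqrt_nonneg _
  set τ := ε ^ (2 / (κ + 2)) with hτ
  have hτpos : 0 < τ := hεpos
  have hκ2 : (0:ℝ) < κ + 2 := by linarith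
  have hεpos' : 0 < ε := by
    rcases hεnn.lt_or_eq with h | h
    · exact h
    · exfalso
      rw [hτ, ← h, Real.zero_rpow (by positivity)] at hτpos
      exact lt_irrefl 0 hτpos
  have hsq : ε ^ 2 = I := Real.sq_sqrt hInonneg
  -- M ⊆ A ∪ B
  have hsub : {u | (g u ≤ 0) ≠ (gHat u ≤ 0)} ⊆
      {u | |g u| ≤ τ} ∪ {u | τ ^ 2 ≤ (g u - gHat u) ^ 2} := by
    intro u hu
    by_cases hA : |g u| ≤ τ
    · exact Or.inl hA
    · right
      push_neg at hA
      simp only [mem_setOf_eq, ne_eq] at hu ⊢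
      have habs : τ ≤ |g u - gHat u| := by
        by_cases hgle : g u ≤ 0
        · have hgH : ¬ gHat u ≤ 0 := fun h => hu (by simp [hgle, h])
          push_neg at hgH
          have h1 : τ < -(g u) := by
            rw [abs_of_nonpos hgle] at hA; exact hA
          calc τ ≤ gHat u - g u := by linarith
            _ ≤ |gHat u - g u| := le_abs_self _
            _ = |g u - gHat u| := abs_sub_comm _ _
        · have hgH : gHat u ≤ 0 := by
            by_contra h
            exact hu (by simp [hgle, h])
          push_neg at hgle
          have h1 : τ < g u := by
            rw [abs_of_pos hgle] at hA; exact hA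
          calc τ ≤ g u - gHat u := by linarith
            _ ≤ |g u - gHat u| := le_abs_self _
      calc τ ^ 2 ≤ |g u - gHat u| ^ 2 := pow_le_pow_left₀ (le_of_lt hτpos) habs 2
        _ = (g u - gHat u) ^ 2 := sq_abs _
  -- piece A
  have hAmeas : (ν {u | |g u| ≤ τ}).toReal ≤ Cm * τ ^ κ := hmargin τ hτpos hετ₀
  -- piece B : Chebyshev
  have hBmeas : (ν {u | τ ^ 2 ≤ (g u - gHat u) ^ 2}).toReal ≤ ε ^ 2 / τ ^ 2 := by
    have hcheb := mul_meas_ge_le_integral_of_nonneg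
      (μ := ν) (f := fun u => (g u - gHat u) ^ 2)
      (Filter.Eventually.of_forall fun u => sq_nonneg _) hInt (τ ^ 2)
    rw [← hI, ← hsq] at hcheb
    have hτ2 : (0:ℝ) < τ ^ 2 := by positivity
    rw [le_div_iff₀ hτ2, mul_comm]
    exact hcheb
  -- union bound
  have hunion : (ν {u | (g u ≤ 0) ≠ (gHat u ≤ 0)}).toReal
      ≤ (ν {u | |g u| ≤ τ}).toReal + (ν {u | τ ^ 2 ≤ (g u - gHat u) ^ 2}).toReal := by
    have h1 : ν {u | (g u ≤ 0) ≠ (gHat u ≤ 0)}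
        ≤ ν {u | |g u| ≤ τ} + ν {u | τ ^ 2 ≤ (g u - gHat u) ^ 2} :=
      le_trans (measure_mono hsub) (measure_union_le _ _)
    have hfin1 : ν {u | |g u| ≤ τ} ≠ ⊤ := measure_ne_top _ _
    have hfin2 : ν {u | τ ^ 2 ≤ (g u - gHat u) ^ 2} ≠ ⊤ := measure_ne_top _ _
    calc (ν {u | (g u ≤ 0) ≠ (gHat u ≤ 0)}).toReal
        ≤ (ν {u | |g u| ≤ τ} + ν {u | τ ^ 2 ≤ (g u - gHat u) ^ 2}).toReal :=
          ENNReal.toReal_mono (ENNReal.add_ne_top.mpr ⟨hfin1, hfin2⟩) h1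
      _ = _ := ENNReal.toReal_add hfin1 hfin2
  -- exponent arithmetic
  have hexp1 : τ ^ κ = ε ^ (2 * κ / (κ + 2)) := by
    rw [hτ, ← Real.rpow_mul hεnn]
    congr 1
    field_simp
  have hexp2 : ε ^ 2 / τ ^ 2 = ε ^ (2 * κ / (κ + 2)) := by
    have h1 : ε ^ 2 = ε ^ ((2:ℕ):ℝ) := (Real.rpow_natCast ε 2).symm
    have h2 : τ ^ 2 = τ ^ ((2:ℕ):ℝ) := (Real.rpow_natCast τ 2).symm
    rw [h1, h2, hτ, ← Real.rpow_mul hεnn, ← Real.rpow_sub hεpos']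
    congr 1
    push_cast
    field_simp
    ring
  calc (ν {u | (g u ≤ 0) ≠ (gHat u ≤ 0)}).toReal
      ≤ (ν {u | |g u| ≤ τ}).toReal + (ν {u | τ ^ 2 ≤ (g u - gHat u) ^ 2}).toReal := hunion
    _ ≤ Cm * τ ^ κ + ε ^ 2 / τ ^ 2 := add_le_add hAmeas hBmeas
    _ = Cm * ε ^ (2 * κ / (κ + 2)) + ε ^ (2 * κ / (κ + 2)) := by rw [hexp1, hexp2]
    _ = (Cm + 1) * ε ^ (2 * κ / (κ + 2)) := by ring
end

section
/- Let p and q be probability densities on ℝ^d with p(u) ≤ C_∞ q(u) for Lebesgue-a.e. u (C_∞ > 0 finite), let ν be the probability measure with density q, let g, ĝ : ℝ^d → ℝ be measurable, and suppose the margin condition ν({u : |g(u)| ≤ τ}) ≤ C_m τ^κ holds for all 0 < τ ≤ τ₀ (C_m > 0, κ > 0, τ₀ > 0). Let ε = ( ∫ (g - ĝ)² dν )^{1/2} and assume 0 < ε^{2/(κ+2)} ≤ τ₀. Then the true failure probability P_F = ∫ 𝟙_{g≤0} p du and the surrogate-induced failure probability P̂ = ∫ 𝟙_{ĝ≤0}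 p du satisfy |P̂ - P_F| ≤ C_∞ (C_m + 1) · ε^{2κ/(κ+2)}. -/
open MeasureTheory Set

/-- Surrogate-induced bias bound: if `p ≤ C_∞ q` a.e. and the proposal measure
`ν` (with density `q`) satisfies the margin condition `ν(|g| ≤ τ) ≤ C_m τ^κ` for
`0 < τ ≤ τ₀`, and the local surrogate error `ε = (∫ (g - ĝ)² dν)^{1/2}` satisfies
`0 < ε^{2/(κ+2)} ≤ τ₀`, then the true and surrogate-induced failure probabilities
satisfy `|P̂ - P_F| ≤ C_∞ (C_m + 1) ε^{2κ/(κ+2)}`. -/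
theorem surrogate_failure_probability_bias_margin
    (d : ℕ) (p q g gHat : (Fin d → ℝ) → ℝ)
    (hp : Measurable p) (hq : Measurable q) (hg : Measurable g) (hgHat : Measurable gHat)
    (hp0 : ∀ u, 0 ≤ p u) (hq0 : ∀ u, 0 ≤ q u)
    (hp1 : ∫ u, p u = 1) (hq1 : ∫ u, q u = 1)
    (Cinf : ℝ) (hCinf : 0 < Cinf)
    (hbound : ∀ᵐ u, p u ≤ Cinf * q u)
    (Cm κ τ₀ : ℝ) (hCm : 0 < Cm) (hκ : 0 < κ) (hτ₀ : 0 < τ₀)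
    (hmargin : ∀ τ : ℝ, 0 < τ → τ ≤ τ₀ →
      ((volume.withDensity fun u => ENNReal.ofReal (q u)) {u | |g u| ≤ τ}).toReal
        ≤ Cm * τ ^ κ)
    (hInt : Integrable (fun u => (g u - gHat u) ^ 2)
      (volume.withDensity fun u => ENNReal.ofReal (q u)))
    (hεpos : 0 < (Real.sqrt (∫ u, (g u - gHat u) ^ 2
        ∂(volume.withDensity fun u => ENNReal.ofReal (q u)))) ^ (2 / (κ + 2)))
    (hετ₀ : (Real.sqrt (∫ u, (g u - gHat u) ^ 2
        ∂(volume.withDensity fun u => ENNReal.ofReal (q u)))) ^ (2 / (κ + 2)) ≤ τ₀) :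
    |(∫ u in {u | gHat u ≤ 0}, p u) - ∫ u in {u | g u ≤ 0}, p u|
      ≤ Cinf * (Cm + 1)
          * (Real.sqrt (∫ u, (g u - gHat u) ^ 2
              ∂(volume.withDensity fun u => ENNReal.ofReal (q u)))) ^ (2 * κ / (κ + 2)) := by
  set ν := volume.withDensity fun u => ENNReal.ofReal (q u) with hνdef
  set ε := Real.sqrt (∫ u, (g u - gHat u) ^ 2 ∂ν) with hεdef
  have hκ2 : (0:ℝ) < κ + 2 := by linarith
  have hε0 : 0 ≤ ε := Real.sqrt_nonneg _
  have hεpos' : 0 < ε := by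
    rcases hε0.lt_or_eq with h | h
    · exact h
    · exfalso
      rw [← h, Real.zero_rpow (by positivity)] at hεpos
      exact lt_irrefl 0 hεpos
  set τ := ε ^ (2 / (κ + 2)) with hτdef
  have hτpos : 0 < τ := hεpos
  -- the exponent quantity
  set E := ε ^ (2 * κ / (κ + 2)) with hEdef
  have hE0 : 0 ≤ E := Real.rpow_nonneg hε0 _
  -- integrability of p and q
  have hqInt : Integrable q := by
    by_contra h
    rw [integral_undef h] at hq1; norm_num at hq1
  have hpInt : Integrable p := by
    by_contra h
    rw [integral_undef h] at hp1; norm_num at hp1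
  -- ν is a finite measure
  have hνuniv : ν univ = 1 := by
    rw [hνdef, withDensity_apply _ MeasurableSet.univ, Measure.restrict_univ,
      ← ofReal_integral_eq_lintegral_ofReal hqInt (Filter.Eventually.of_forall hq0), hq1]
    simp
  have : IsFiniteMeasure ν := ⟨by rw [hνuniv]; exact ENNReal.one_lt_top⟩
  -- sets
  set A := {u : Fin d → ℝ | gHat u ≤ 0} with hAdef
  set B := {u : Fin d → ℝ | g u ≤ 0} with hBdef
  have hAm : MeasurableSet A := measurableSet_le hgHat measurable_const
  have hBm : MeasurableSet B := measurableSet_le hg measurable_const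
  set S1 := {u : Fin d → ℝ | |g u| ≤ τ} with hS1def
  set S2 := {u : Fin d → ℝ | τ ^ 2 ≤ (g u - gHat u) ^ 2} with hS2def
  have hS1m : MeasurableSet S1 := measurableSet_le hg.abs measurable_const
  have hS2m : MeasurableSet S2 := measurableSet_le measurable_const ((hg.sub hgHat).pow_const 2)
  set S := S1 ∪ S2 with hSdef
  have hSm : MeasurableSet S := hS1m.union hS2m
  -- disagreement set inclusion
  have hsub : (A \ B) ∪ (B \ A) ⊆ S := by
    rintro u (⟨hA, hB⟩ | ⟨hB, hA⟩)
    · simp only [hAdef, hBdef, mem_setOf_eq, not_le] at hA hB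
      rcases le_or_gt (g u) τ with hc | hc
      · exact Or.inl (abs_le.mpr ⟨by linarith, hc⟩)
      · refine Or.inr ?_
        show τ ^ 2 ≤ (g u - gHat u) ^ 2
        exact pow_le_pow_left₀ hτpos.le (by linarith) 2
    · simp only [hAdef, hBdef, mem_setOf_eq, not_le] at hA hB
      rcases le_or_gt (-τ) (g u) with hc | hc
      · exact Or.inl (abs_le.mpr ⟨hc, by linarith⟩)
      · refine Or.inr ?_
        show τ ^ 2 ≤ (g u - gHat u) ^ 2
        have h1 : τ ^ 2 ≤ (gHat u - g u) ^ 2 :=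
          pow_le_pow_left₀ hτpos.le (by linarith) 2
        have h2 : (gHat u - g u) ^ 2 = (g u - gHat u) ^ 2 := by ring
        linarith
  -- step 1: |P̂ - P_F| ≤ ∫_S p
  have hdecompA : (∫ u in A ∩ B, p u) + ∫ u in A \ B, p u = ∫ u in A, p u :=
    integral_inter_add_diff hBm hpInt.integrableOn
  have hdecompB : (∫ u in B ∩ A, p u) + ∫ u in B \ A, p u = ∫ u in B, p u :=
    integral_inter_add_diff hAm hpInt.integrableOn
  have hBA : ∫ u in B ∩ A, p u = ∫ u in A ∩ B, p u := by rw [inter_comm]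
  have hnn1 : 0 ≤ ∫ u in A \ B, p u := setIntegral_nonneg (hAm.diff hBm) fun u _ => hp0 u
  have hnn2 : 0 ≤ ∫ u in B \ A, p u := setIntegral_nonneg (hBm.diff hAm) fun u _ => hp0 u
  have hunion : (∫ u in A \ B, p u) + ∫ u in B \ A, p u
      = ∫ u in (A \ B) ∪ (B \ A), p u := by
    rw [setIntegral_union disjoint_sdiff_sdiff (hBm.diff hAm)
      hpInt.integrableOn hpInt.integrableOn]
  have hmono : (∫ u in (A \ B) ∪ (B \ A), p u) ≤ ∫ u in S, p u :=
    setIntegral_mono_set hpInt.integrableOn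
      (Filter.Eventually.of_forall fun u => hp0 u) (HasSubset.Subset.eventuallyLE hsub)
  have step1 : |(∫ u in A, p u) - ∫ u in B, p u| ≤ ∫ u in S, p u := by
    rw [← hdecompA, ← hdecompB, hBA]
    have : (∫ u in A ∩ B, p u) + (∫ u in A \ B, p u)
        - ((∫ u in A ∩ B, p u) + ∫ u in B \ A, p u)
        = (∫ u in A \ B, p u) - ∫ u in B \ A, p u := by ring
    rw [this]
    rw [abs_sub_le_iff]
    constructor
    · calc (∫ u in A \ B, p u) - ∫ u in B \ A, p u
          ≤ (∫ u in A \ B, p u) + ∫ u in B \ A, p u := by linarith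
        _ = ∫ u in (A \ B) ∪ (B \ A), p u := hunion
        _ ≤ ∫ u in S, p u := hmono
    · calc (∫ u in B \ A, p u) - ∫ u in A \ B, p u
          ≤ (∫ u in A \ B, p u) + ∫ u in B \ A, p u := by linarith
        _ = ∫ u in (A \ B) ∪ (B \ A), p u := hunion
        _ ≤ ∫ u in S, p u := hmono
  -- step 2: ∫_S p ≤ Cinf * (ν S).toReal
  have step2 : (∫ u in S, p u) ≤ Cinf * (ν S).toReal := by
    have h1 : (∫ u in S, p u) ≤ ∫ u in S, Cinf * q u :=
      integral_mono_ae hpInt.integrableOn ((hqInt.const_mul Cinf).integrableOn)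
        (ae_restrict_of_ae hbound)
    have h2 : (∫ u in S, Cinf * q u) = Cinf * ∫ u in S, q u := integral_const_mul _ _
    have h3 : (ν S).toReal = ∫ u in S, q u := by
      rw [hνdef, withDensity_apply _ hSm,
        ← ofReal_integral_eq_lintegral_ofReal hqInt.integrableOn
          (ae_restrict_of_ae (Filter.Eventually.of_forall hq0)),
        ENNReal.toReal_ofReal (setIntegral_nonneg hSm fun u _ => hq0 u)]
    rw [h3]
    calc (∫ u in S, p u) ≤ ∫ u in S, Cinf * q u := h1
      _ = Cinf * ∫ u in S, q u := h2
  -- step 3: measure bounds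
  have hms1 : (ν S1).toReal ≤ Cm * E := by
    have hm := hmargin τ hτpos hετ₀
    have hτκ : τ ^ κ = E := by
      rw [hτdef, ← Real.rpow_mul hε0, hEdef]
      congr 1
      field_simp
    rw [hτκ] at hm
    exact hm
  have hms2 : (ν S2).toReal ≤ E := by
    have hcheb := mul_meas_ge_le_integral_of_nonneg (μ := ν)
      (Filter.Eventually.of_forall fun u => sq_nonneg (g u - gHat u)) hInt (τ ^ 2)
    have hI : (∫ u, (g u - gHat u) ^ 2 ∂ν) = ε ^ 2 := by
      rw [hεdef, Real.sq_sqrt (integral_nonneg fun u => sq_nonneg _)]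
    rw [hI] at hcheb
    have hτ2pos : (0:ℝ) < τ ^ 2 := by positivity
    have h2 : (ν S2).toReal ≤ ε ^ 2 / τ ^ 2 := by
      rw [le_div_iff₀ hτ2pos]
      calc (ν S2).toReal * τ ^ 2 = τ ^ 2 * (ν S2).toReal := by ring
        _ ≤ ε ^ 2 := hcheb
    have h3 : ε ^ 2 / τ ^ 2 = E := by
      have e1 : ε ^ 2 = ε ^ (2:ℝ) := by
        rw [← Real.rpow_natCast ε 2]; norm_num
      have e2 : τ ^ 2 = ε ^ (2 / (κ + 2) * 2) := by
        rw [hτdef, ← Real.rpow_natCast (ε ^ (2 / (κ + 2))) 2, ← Real.rpow_mul hε0]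
        norm_num
      rw [e1, e2, ← Real.rpow_sub hεpos', hEdef]
      congr 1
      field_simp
      ring
    rw [h3] at h2
    exact h2
  have hmsS : (ν S).toReal ≤ Cm * E + E := by
    have hu : ν S ≤ ν S1 + ν S2 := measure_union_le S1 S2
    have hfin : (ν S1 + ν S2) ≠ ⊤ :=
      ENNReal.add_ne_top.mpr ⟨measure_ne_top ν _, measure_ne_top ν _⟩
    have := ENNReal.toReal_le_toReal (measure_ne_top ν S) hfin |>.mpr hu
    rw [ENNReal.toReal_add (measure_ne_top ν _) (measure_ne_top ν _)] at this
    linarith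
  calc |(∫ u in A, p u) - ∫ u in B, p u| ≤ ∫ u in S, p u := step1
    _ ≤ Cinf * (ν S).toReal := step2
    _ ≤ Cinf * (Cm * E + E) := by
        exact mul_le_mul_of_nonneg_left hmsS hCinf.le
    _ = Cinf * (Cm + 1) * E := by ring
end

section
/- Let p and q be probability densities on ℝ^d with p(u) ≤ C_∞ q(u) a.e. (C_∞ > 0 finite), let ν be the probability measure with density q, and let g, ĝ : ℝ^d → ℝ be measurable. Suppose: (i) the margin condition ν({|g| ≤ τ}) ≤ C_m τ^κ holds for all 0 < τ ≤ τ₀ (C_m > 0, κ > 0, τ₀ > 0); (ii) ε := (∫ (g−ĝ)² dν)^{1/2} satisfies 0 < ε^{2/(κ+2)} ≤ τ₀; (iii) P̂ := ∫ 𝟙_{ĝ≤0} p du > 0 and ∫ 𝟙_{ĝ≤0} p²/q du < ∞. Let P_F = ∫ 𝟙_{g≤0} p du, let q̂⋆(u) = 𝟙_{ĝ(u)≤0} p(u)/P̂, and let χ² = ∫ q̂⋆(u)²/q(u) du − 1. Let U₁, …, U_N be i.i.d. with law ν and P̂_N = (1/N) Σ_{i=1}^{N} 𝟙_{ĝ(U_i)≤0}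 p(U_i)/q(U_i). Then 𝔼[ |P̂_N − P_F| ] ≤ C_∞ (C_m + 1) ε^{2κ/(κ+2)} + (P̂ / √N) √(χ²). -/
open MeasureTheory Set
open scoped NNReal ENNReal


lemma bias_bound {α : Type*} [MeasurableSpace α] (μ : Measure α)
    (p q g gHat : α → ℝ)
    (hq : Measurable q) (hg : Measurable g) (hgHat : Measurable gHat)
    (hp0 : ∀ u, 0 ≤ p u) (hq0 : ∀ u, 0 ≤ q u)
    (hpInt : Integrable p μ) (hqInt : Integrable q μ)
    (Cinf : ℝ) (hCinf : 0 < Cinf) (hbound : ∀ᵐ u ∂μ, p u ≤ Cinf * q u)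
    (Cm κ τ₀ : ℝ) (hCm : 0 < Cm) (hκ : 0 < κ) (hτ₀ : 0 < τ₀)
    (hmargin : ∀ τ : ℝ, 0 < τ → τ ≤ τ₀ →
      ((μ.withDensity fun u => ENNReal.ofReal (q u)) {u | |g u| ≤ τ}).toReal ≤ Cm * τ ^ κ)
    (hIntErr : Integrable (fun u => (g u - gHat u) ^ 2)
      (μ.withDensity fun u => ENNReal.ofReal (q u)))
    (hεpos : 0 < (Real.sqrt (∫ u, (g u - gHat u) ^ 2
        ∂(μ.withDensity fun u => ENNReal.ofReal (q u)))) ^ (2 / (κ + 2)))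
    (hετ₀ : (Real.sqrt (∫ u, (g u - gHat u) ^ 2
        ∂(μ.withDensity fun u => ENNReal.ofReal (q u)))) ^ (2 / (κ + 2)) ≤ τ₀) :
    |(∫ u in {u | gHat u ≤ 0}, p u ∂μ) - ∫ u in {u | g u ≤ 0}, p u ∂μ|
      ≤ Cinf * (Cm + 1) * (Real.sqrt (∫ u, (g u - gHat u) ^ 2
          ∂(μ.withDensity fun u => ENNReal.ofReal (q u)))) ^ (2 * κ / (κ + 2)) := by
  set ν : Measure α := μ.withDensity fun u => ENNReal.ofReal (q u) with hν
  set ε : ℝ := Real.sqrt (∫ u, (g u - gHat u) ^ 2 ∂ν) with hε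
  have hε0 : 0 ≤ ε := Real.sqrt_nonneg _
  have hεpos' : 0 < ε := by
    rcases lt_or_eq_of_le hε0 with h | h
    · exact h
    · exfalso
      rw [← h, Real.zero_rpow (by positivity)] at hεpos
      exact lt_irrefl 0 hεpos
  set τ : ℝ := ε ^ (2 / (κ + 2)) with hτ
  have hτpos : 0 < τ := hεpos
  have hκ2 : (0:ℝ) < κ + 2 := by positivity
  -- finiteness of ν
  have hνfin : IsFiniteMeasure ν := by
    refine isFiniteMeasure_withDensity ?_
    rw [← ofReal_integral_eq_lintegral_ofReal hqInt (ae_of_all _ hq0)]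
    exact ENNReal.ofReal_ne_top
  -- sets
  set A : Set α := {u | gHat u ≤ 0} with hA
  set B : Set α := {u | g u ≤ 0} with hB
  have hAm : MeasurableSet A := measurableSet_le hgHat measurable_const
  have hBm : MeasurableSet B := measurableSet_le hg measurable_const
  set S : Set α := (A \ B) ∪ (B \ A) with hS
  have hSm : MeasurableSet S := ((hAm.diff hBm).union (hBm.diff hAm))
  -- step 1 : |∫_A p − ∫_B p| ≤ ∫_S p
  have h1 : |(∫ u in A, p u ∂μ) - ∫ u in B, p u ∂μ| ≤ ∫ u in S, p u ∂μ := by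
    have e1 : (∫ u in A ∩ B, p u ∂μ) + ∫ u in A \ B, p u ∂μ = ∫ u in A, p u ∂μ :=
      integral_inter_add_diff hBm hpInt.integrableOn
    have e2 : (∫ u in B ∩ A, p u ∂μ) + ∫ u in B \ A, p u ∂μ = ∫ u in B, p u ∂μ :=
      integral_inter_add_diff hAm hpInt.integrableOn
    have e3 : A ∩ B = B ∩ A := Set.inter_comm _ _
    have e4 : (∫ u in S, p u ∂μ) = (∫ u in A \ B, p u ∂μ) + ∫ u in B \ A, p u ∂μ := by
      rw [hS]
      exact setIntegral_union disjoint_sdiff_sdiff (hBm.diff hAm)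
        hpInt.integrableOn hpInt.integrableOn
    have n1 : 0 ≤ ∫ u in A \ B, p u ∂μ := setIntegral_nonneg (hAm.diff hBm) fun u _ => hp0 u
    have n2 : 0 ≤ ∫ u in B \ A, p u ∂μ := setIntegral_nonneg (hBm.diff hAm) fun u _ => hp0 u
    rw [abs_le]
    constructor <;> [skip; skip] <;> rw [e4] <;> nlinarith [e1, e2, e3 ▸ e1]
  -- step 2 : ∫_S p ≤ Cinf * (ν S).toReal
  have h2 : (∫ u in S, p u ∂μ) ≤ Cinf * (ν S).toReal := by
    have : (∫ u in S, p u ∂μ) ≤ ∫ u in S, Cinf * q u ∂μ := by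
      refine setIntegral_mono_ae hpInt.integrableOn (hqInt.const_mul Cinf).integrableOn ?_
      exact hbound
    have e : ∫ u in S, Cinf * q u ∂μ = Cinf * ∫ u in S, q u ∂μ := integral_const_mul _ _
    have e2 : ∫ u in S, q u ∂μ = (ν S).toReal := by
      rw [hν, withDensity_apply _ hSm,
        ← ofReal_integral_eq_lintegral_ofReal hqInt.integrableOn
          (ae_restrict_of_ae (ae_of_all _ hq0)),
        ENNReal.toReal_ofReal (setIntegral_nonneg hSm fun u _ => hq0 u)]
    calc (∫ u in S, p u ∂μ) ≤ ∫ u in S, Cinf * q u ∂μ := this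
      _ = Cinf * (ν S).toReal := by rw [e, e2]
  -- step 3 : ν S ≤ ν {|g| ≤ τ} + ν {τ² ≤ (g−ĝ)²}
  set S₁ : Set α := {u | |g u| ≤ τ} with hS₁
  set S₂ : Set α := {u | τ ^ 2 ≤ (g u - gHat u) ^ 2} with hS₂
  have hsub : S ⊆ S₁ ∪ S₂ := by
    rintro u (⟨huA, huB⟩ | ⟨huB, huA⟩)
    · simp only [hA, hB, Set.mem_setOf_eq, not_le] at huA huB
      by_cases hc : g u ≤ τ
      · left; simp only [hS₁, Set.mem_setOf_eq, abs_le]; constructor <;> nlinarith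
      · right; push_neg at hc
        simp only [hS₂, Set.mem_setOf_eq]; nlinarith
    · simp only [hA, hB, Set.mem_setOf_eq, not_le] at huA huB
      by_cases hc : -τ ≤ g u
      · left; simp only [hS₁, Set.mem_setOf_eq, abs_le]; constructor <;> nlinarith
      · right; push_neg at hc
        simp only [hS₂, Set.mem_setOf_eq]; nlinarith
  have h3 : (ν S).toReal ≤ (ν S₁).toReal + (ν S₂).toReal := by
    have hle : ν S ≤ ν S₁ + ν S₂ := le_trans (measure_mono hsub) (measure_union_le _ _)
    have h1' : ν S₁ ≠ ⊤ := measure_ne_top ν _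
    have h2' : ν S₂ ≠ ⊤ := measure_ne_top ν _
    calc (ν S).toReal ≤ (ν S₁ + ν S₂).toReal := ENNReal.toReal_mono (by simp [h1', h2', ENNReal.add_ne_top]) hle
      _ = (ν S₁).toReal + (ν S₂).toReal := ENNReal.toReal_add h1' h2'
  -- margin bound
  have hm1 : (ν S₁).toReal ≤ Cm * τ ^ κ := hmargin τ hτpos hετ₀
  -- Chebyshev
  have hm2 : (ν S₂).toReal ≤ ε ^ 2 / τ ^ 2 := by
    have cheb := mul_meas_ge_le_integral_of_nonneg
      (ae_of_all ν fun u => sq_nonneg (g u - gHat u)) hIntErr (τ ^ 2)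
    have hI0 : 0 ≤ ∫ u, (g u - gHat u) ^ 2 ∂ν := integral_nonneg fun u => sq_nonneg _
    have heq : (∫ u, (g u - gHat u) ^ 2 ∂ν) = ε ^ 2 := (Real.sq_sqrt hI0).symm
    rw [heq] at cheb
    rw [le_div_iff₀ (by positivity : (0:ℝ) < τ ^ 2)]
    calc (ν S₂).toReal * τ ^ 2 = τ ^ 2 * (ν S₂).toReal := by ring
      _ ≤ ε ^ 2 := cheb
  -- arithmetic: ε²/τ² = τ^κ = ε^(2κ/(κ+2))
  have key1 : τ ^ κ = ε ^ (2 * κ / (κ + 2)) := by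
    rw [hτ, ← Real.rpow_mul hε0]
    congr 1
    field_simp
  have key2 : ε ^ 2 / τ ^ 2 = ε ^ (2 * κ / (κ + 2)) := by
    have e1 : τ ^ 2 = ε ^ (4 / (κ + 2)) := by
      rw [hτ, ← Real.rpow_natCast (ε ^ (2 / (κ + 2))) 2, ← Real.rpow_mul hε0]
      norm_num
      congr 1
      ring
    have e2 : ε ^ 2 = ε ^ ((2:ℝ)) := by
      rw [← Real.rpow_natCast ε 2]; norm_num
    rw [e1, e2, ← Real.rpow_sub hεpos']
    congr 1
    field_simp
    ring
  calc |(∫ u in A, p u ∂μ) - ∫ u in B, p u ∂μ| ≤ ∫ u in S, p u ∂μ := h1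
    _ ≤ Cinf * (ν S).toReal := h2
    _ ≤ Cinf * ((ν S₁).toReal + (ν S₂).toReal) := by gcongr
    _ ≤ Cinf * (Cm * τ ^ κ + ε ^ 2 / τ ^ 2) := by gcongr
    _ = Cinf * (Cm + 1) * ε ^ (2 * κ / (κ + 2)) := by rw [key1, key2]; ring


lemma mc_bound {α : Type*} [MeasurableSpace α] (μ : Measure α)
    (p q gHat : α → ℝ)
    (hp : Measurable p) (hq : Measurable q) (hgHat : Measurable gHat)
    (hp0 : ∀ u, 0 ≤ p u) (hq0 : ∀ u, 0 ≤ q u)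
    (hpInt : Integrable p μ) (hqInt : Integrable q μ) (hq1 : ∫ u, q u ∂μ = 1)
    (hbound : ∀ᵐ u ∂μ, p u ≤ Cinf * q u) (hCinf : 0 < Cinf)
    (hP : 0 < ∫ u in {u | gHat u ≤ 0}, p u ∂μ)
    (hInt2 : Integrable (fun u =>
      Set.indicator {u | gHat u ≤ 0} (fun u => (p u) ^ 2 / q u) u) μ)
    (N : ℕ) (hN : 1 ≤ N)
    (Ω' : Type*) [MeasurableSpace Ω'] (P : Measure Ω') [IsProbabilityMeasure P]
    (U : Fin N → Ω' → α)
    (hUmeas : ∀ i, Measurable (U i))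
    (hiid : ProbabilityTheory.iIndepFun U P)
    (hlaw : ∀ i, P.map (U i) = μ.withDensity fun u => ENNReal.ofReal (q u)) :
    (∫ ω, |(1 / (N : ℝ)) * ∑ i : Fin N,
          Set.indicator {u | gHat u ≤ 0} (fun u => p u / q u) (U i ω)
        - ∫ u in {u | gHat u ≤ 0}, p u ∂μ| ∂P)
      ≤ ((∫ u in {u | gHat u ≤ 0}, p u ∂μ) / Real.sqrt (N : ℝ))
            * Real.sqrt ((∫ u, (Set.indicator {u | gHat u ≤ 0} (fun v => p v) u
                  / (∫ v in {v | gHat v ≤ 0}, p v ∂μ)) ^ 2 / q u ∂μ) - 1) := by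
  classical
  set A : Set α := {u | gHat u ≤ 0} with hA
  have hAm : MeasurableSet A := measurableSet_le hgHat measurable_const
  set ν : Measure α := μ.withDensity fun u => ENNReal.ofReal (q u) with hν
  set f : α → ℝ := A.indicator (fun u => p u / q u) with hf
  have hfm : Measurable f := (hp.div hq).indicator hAm
  set Phat : ℝ := ∫ u in A, p u ∂μ with hPhat
  set M2 : ℝ := ∫ u, A.indicator (fun u => (p u) ^ 2 / q u) u ∂μ with hM2
  have hNν : ν = μ.withDensity fun u => (((q u).toNNReal : ℝ≥0) : ℝ≥0∞) := rfl
  have hqm' : Measurable fun u => (q u).toNNReal := hq.real_toNNReal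
  haveI hνprob : IsProbabilityMeasure ν := by
    constructor
    rw [hν, withDensity_apply _ MeasurableSet.univ, Measure.restrict_univ,
      ← ofReal_integral_eq_lintegral_ofReal hqInt (ae_of_all _ hq0), hq1, ENNReal.ofReal_one]
  -- a.e. identity for first moment
  have hq0' : ∀ᵐ u ∂μ, q u = 0 → p u = 0 := by
    filter_upwards [hbound] with u hu h0
    have := hp0 u
    nlinarith [hu, h0]
  have hsmul1 : ∀ᵐ u ∂μ, q u * f u = A.indicator p u := by
    filter_upwards [hq0'] with u hu
    by_cases hmem : u ∈ A
    · rw [hf, Set.indicator_of_mem hmem, Set.indicator_of_mem hmem]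
      by_cases hqu : q u = 0
      · rw [hqu, hu hqu]; simp
      · field_simp
    · rw [hf, Set.indicator_of_notMem hmem, Set.indicator_of_notMem hmem, mul_zero]
  -- everywhere identity for second moment
  have hsmul2 : ∀ u, q u * (f u) ^ 2 = A.indicator (fun u => (p u) ^ 2 / q u) u := by
    intro u
    by_cases hmem : u ∈ A
    · rw [hf, Set.indicator_of_mem hmem, Set.indicator_of_mem hmem]
      by_cases hqu : q u = 0
      · simp [hqu]
      · field_simp
    · rw [hf, Set.indicator_of_notMem hmem, Set.indicator_of_notMem hmem]; simp
  -- first moment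
  have hm1 : ∫ u, f u ∂ν = Phat := by
    rw [hNν, integral_withDensity_eq_integral_smul hqm' f]
    have : ∀ᵐ u ∂μ, (q u).toNNReal • f u = A.indicator p u := by
      filter_upwards [hsmul1] with u hu
      rw [NNReal.smul_def, smul_eq_mul, Real.coe_toNNReal _ (hq0 u), hu]
    rw [integral_congr_ae this, integral_indicator hAm]
  -- second moment
  have hm2 : ∫ u, (f u) ^ 2 ∂ν = M2 := by
    rw [hNν, integral_withDensity_eq_integral_smul hqm' (fun u => (f u) ^ 2)]
    have : ∀ u, (q u).toNNReal • (f u) ^ 2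
        = A.indicator (fun u => (p u) ^ 2 / q u) u := by
      intro u
      rw [NNReal.smul_def, smul_eq_mul, Real.coe_toNNReal _ (hq0 u), hsmul2 u]
    rw [integral_congr_ae (ae_of_all _ this)]
  -- f ∈ L²(ν)
  have hfsq_int : Integrable (fun u => (f u) ^ 2) ν := by
    rw [hNν, integrable_withDensity_iff_integrable_smul hqm']
    refine hInt2.congr (ae_of_all _ fun u => ?_)
    show A.indicator (fun u => (p u) ^ 2 / q u) u = (q u).toNNReal • (f u) ^ 2
    rw [NNReal.smul_def, smul_eq_mul, Real.coe_toNNReal _ (hq0 u), hsmul2 u]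
  have hfmem : MemLp f 2 ν :=
    (memLp_two_iff_integrable_sq hfm.aestronglyMeasurable).2 hfsq_int
  -- variance of f
  have hVf : ProbabilityTheory.variance f ν = M2 - Phat ^ 2 := by
    rw [ProbabilityTheory.variance_eq_sub hfmem]
    simp only [Pi.pow_apply]
    rw [hm1, hm2]
  have hV0 : 0 ≤ M2 - Phat ^ 2 := hVf ▸ ProbabilityTheory.variance_nonneg f ν
  -- random variables
  set X : Fin N → Ω' → ℝ := fun i ω => f (U i ω) with hX
  have hXmem : ∀ i, MemLp (X i) 2 P := by
    intro i
    have h1 : MemLp f 2 (P.map (U i)) := by rw [hlaw i]; exact hfmem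
    exact (memLp_map_measure_iff hfm.aestronglyMeasurable (hUmeas i).aemeasurable).1 h1
  have hXint : ∀ i, Integrable (X i) P := fun i => (hXmem i).integrable one_le_two
  have hXmean : ∀ i, ∫ ω, X i ω ∂P = Phat := by
    intro i
    rw [hX]
    have : ∫ ω, f (U i ω) ∂P = ∫ u, f u ∂(P.map (U i)) :=
      (integral_map (hUmeas i).aemeasurable hfm.aestronglyMeasurable).symm
    rw [this, hlaw i]; exact hm1
  have hXsq : ∀ i, ∫ ω, (X i ω) ^ 2 ∂P = M2 := by
    intro i
    have : ∫ ω, (f (U i ω)) ^ 2 ∂P = ∫ u, (f u) ^ 2 ∂(P.map (U i)) :=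
      (integral_map (hUmeas i).aemeasurable
        (hfm.pow measurable_const).aestronglyMeasurable).symm
    rw [hX, this, hlaw i]; exact hm2
  have hXvar : ∀ i, ProbabilityTheory.variance (X i) P = M2 - Phat ^ 2 := by
    intro i
    rw [ProbabilityTheory.variance_eq_sub (hXmem i)]
    simp only [Pi.pow_apply]
    rw [hXsq i, hXmean i]
  -- independence
  have hXindep : ProbabilityTheory.iIndepFun X P :=
    hiid.comp (fun _ => f) (fun _ => hfm)
  -- sum
  set S : Ω' → ℝ := ∑ i : Fin N, X i with hS
  have hSapp : ∀ ω, S ω = ∑ i : Fin N, X i ω := by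
    intro ω; rw [hS]; simp
  have hSmem : MemLp S 2 P := memLp_finsetSum' _ fun i _ => hXmem i
  have hSvar : ProbabilityTheory.variance S P = N * (M2 - Phat ^ 2) := by
    rw [hS, ProbabilityTheory.IndepFun.variance_sum (fun i _ => hXmem i)
      (fun i _ j _ hij => hXindep.indepFun hij)]
    simp [hXvar, Finset.sum_const, Finset.card_univ]
    ring
  have hSmean : ∫ ω, S ω ∂P = N * Phat := by
    rw [integral_congr_ae (ae_of_all _ hSapp), integral_finset_sum _ fun i _ => hXint i]
    simp [hXmean, Finset.sum_const, Finset.card_univ]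
  -- Z
  set Z : Ω' → ℝ := fun ω => (1 / (N : ℝ)) * S ω with hZ
  have hNpos : (0:ℝ) < N := by exact_mod_cast hN
  have hNne : (N:ℝ) ≠ 0 := ne_of_gt hNpos
  have hZmem : MemLp Z 2 P := hSmem.const_mul _
  have hZmean : ∫ ω, Z ω ∂P = Phat := by
    rw [hZ, integral_const_mul, hSmean]
    field_simp
  have hZvar : ProbabilityTheory.variance Z P = (M2 - Phat ^ 2) / N := by
    rw [hZ, ProbabilityTheory.variance_const_mul, hSvar]
    field_simp
  -- ∫ (Z − Phat)² = variance Z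
  have hEY2 : ∫ ω, (Z ω - Phat) ^ 2 ∂P = (M2 - Phat ^ 2) / N := by
    rw [← hZvar, ProbabilityTheory.variance_eq_integral hZmem.aemeasurable, ← hZmean]
  -- Hölder: E|Y| ≤ sqrt(E Y²)
  set Y : Ω' → ℝ := fun ω => Z ω - Phat with hY
  have hYmem : MemLp Y 2 P := hZmem.sub (memLp_const _)
  have habs : ∫ ω, |Y ω| ∂P ≤ Real.sqrt (∫ ω, (Y ω) ^ 2 ∂P) := by
    have hconj : Real.HolderConjugate 2 2 := Real.HolderConjugate.two_two
    have hmem1 : MemLp (fun ω => |Y ω|) (ENNReal.ofReal 2) P := by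
      have : (ENNReal.ofReal 2) = 2 := by norm_num
      rw [this]
      simpa [Real.norm_eq_abs] using hYmem.norm
    have hmem2 : MemLp (fun _ : Ω' => (1:ℝ)) (ENNReal.ofReal 2) P := by
      have : (ENNReal.ofReal 2) = 2 := by norm_num
      rw [this]; exact memLp_const _
    have hH := integral_mul_le_Lp_mul_Lq_of_nonneg hconj
      (ae_of_all P fun ω => abs_nonneg (Y ω)) (ae_of_all P fun _ => zero_le_one)
      hmem1 hmem2
    simp only [mul_one] at hH
    have e1 : ∫ ω, |Y ω| ^ (2:ℝ) ∂P = ∫ ω, (Y ω) ^ 2 ∂P := by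
      congr 1; funext ω
      rw [Real.rpow_two, sq_abs]
    have e2 : ∫ _ : Ω', (1:ℝ) ^ (2:ℝ) ∂P = 1 := by simp
    rw [e1, e2, Real.one_rpow, mul_one, ← Real.sqrt_eq_rpow] at hH
    exact hH
  have hYsq : ∫ ω, (Y ω) ^ 2 ∂P = (M2 - Phat ^ 2) / N := hEY2
  -- χ² identity
  have hchi : (∫ u, (A.indicator p u / Phat) ^ 2 / q u ∂μ) - 1
      = (M2 - Phat ^ 2) / Phat ^ 2 := by
    have e : ∀ u, (A.indicator p u / Phat) ^ 2 / q u
        = A.indicator (fun u => (p u) ^ 2 / q u) u / Phat ^ 2 := by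
      intro u
      by_cases hmem : u ∈ A
      · rw [Set.indicator_of_mem hmem, Set.indicator_of_mem hmem]
        ring
      · rw [Set.indicator_of_notMem hmem, Set.indicator_of_notMem hmem]
        simp
    rw [integral_congr_ae (ae_of_all _ e), integral_div, ← hM2]
    field_simp
  -- final computation
  have hfinal : Real.sqrt ((M2 - Phat ^ 2) / N)
      = (Phat / Real.sqrt N) * Real.sqrt ((M2 - Phat ^ 2) / Phat ^ 2) := by
    rw [Real.sqrt_div hV0, Real.sqrt_div hV0, Real.sqrt_sq hP.le]
    field_simp
  calc (∫ ω, |(1 / (N : ℝ)) * ∑ i : Fin N, f (U i ω) - Phat| ∂P)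
      = ∫ ω, |Z ω - Phat| ∂P := by
        refine integral_congr_ae (ae_of_all _ fun ω => ?_)
        rw [hZ]
        simp [hSapp]
        rfl
    _ ≤ Real.sqrt (∫ ω, (Y ω) ^ 2 ∂P) := habs
    _ = Real.sqrt ((M2 - Phat ^ 2) / N) := by rw [hYsq]
    _ = (Phat / Real.sqrt N) * Real.sqrt ((M2 - Phat ^ 2) / Phat ^ 2) := hfinal
    _ = (Phat / Real.sqrt N)
        * Real.sqrt ((∫ u, (A.indicator p u / Phat) ^ 2 / q u ∂μ) - 1) := by rw [hchi]

/-- Finite-sample surrogate error decomposition: under the bounded likelihood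
ratio `p ≤ C_∞ q` a.e., the margin condition `ν(|g| ≤ τ) ≤ C_m τ^κ` for
`0 < τ ≤ τ₀` (with `ν` the proposal measure with density `q`), local surrogate
error `ε = (∫ (g−ĝ)² dν)^{1/2}` with `0 < ε^{2/(κ+2)} ≤ τ₀`, and i.i.d. samples
`U₁,…,U_N ∼ ν`, the surrogate-based estimator
`P̂_N = (1/N) ∑ᵢ 𝟙_{ĝ(Uᵢ)≤0} p(Uᵢ)/q(Uᵢ)` satisfies
`𝔼[|P̂_N − P_F|] ≤ C_∞ (C_m+1) ε^{2κ/(κ+2)} + (P̂/√N) √(χ²)`, where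
`P_F = ∫_{g≤0} p`, `P̂ = ∫_{ĝ≤0} p`, `q̂⋆ = 𝟙_{ĝ≤0} p/P̂`, and
`χ² = ∫ q̂⋆²/q − 1`. -/
theorem finite_sample_surrogate_error_decomposition
    (d : ℕ) (p q g gHat : (Fin d → ℝ) → ℝ)
    (hp : Measurable p) (hq : Measurable q) (hg : Measurable g) (hgHat : Measurable gHat)
    (hp0 : ∀ u, 0 ≤ p u) (hq0 : ∀ u, 0 ≤ q u)
    (hp1 : ∫ u, p u = 1) (hq1 : ∫ u, q u = 1)
    (Cinf : ℝ) (hCinf : 0 < Cinf)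
    (hbound : ∀ᵐ u, p u ≤ Cinf * q u)
    (Cm κ τ₀ : ℝ) (hCm : 0 < Cm) (hκ : 0 < κ) (hτ₀ : 0 < τ₀)
    (hmargin : ∀ τ : ℝ, 0 < τ → τ ≤ τ₀ →
      ((volume.withDensity fun u => ENNReal.ofReal (q u)) {u | |g u| ≤ τ}).toReal
        ≤ Cm * τ ^ κ)
    (hIntErr : Integrable (fun u => (g u - gHat u) ^ 2)
      (volume.withDensity fun u => ENNReal.ofReal (q u)))
    (hεpos : 0 < (Real.sqrt (∫ u, (g u - gHat u) ^ 2
        ∂(volume.withDensity fun u => ENNReal.ofReal (q u)))) ^ (2 / (κ + 2)))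
    (hετ₀ : (Real.sqrt (∫ u, (g u - gHat u) ^ 2
        ∂(volume.withDensity fun u => ENNReal.ofReal (q u)))) ^ (2 / (κ + 2)) ≤ τ₀)
    (hP : 0 < ∫ u in {u | gHat u ≤ 0}, p u)
    (hInt2 : Integrable (fun u =>
      Set.indicator {u | gHat u ≤ 0} (fun u => (p u) ^ 2 / q u) u))
    (N : ℕ) (hN : 1 ≤ N)
    (Ω' : Type*) [MeasurableSpace Ω'] (P : Measure Ω') [IsProbabilityMeasure P]
    (U : Fin N → Ω' → (Fin d → ℝ))
    (hUmeas : ∀ i, Measurable (U i))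
    (hiid : ProbabilityTheory.iIndepFun U P)
    (hlaw : ∀ i, P.map (U i) = volume.withDensity fun u => ENNReal.ofReal (q u)) :
    (∫ ω, |(1 / (N : ℝ)) * ∑ i : Fin N,
          Set.indicator {u | gHat u ≤ 0} (fun u => p u / q u) (U i ω)
        - ∫ u in {u | g u ≤ 0}, p u| ∂P)
      ≤ Cinf * (Cm + 1)
            * (Real.sqrt (∫ u, (g u - gHat u) ^ 2
                ∂(volume.withDensity fun u => ENNReal.ofReal (q u)))) ^ (2 * κ / (κ + 2))
        + ((∫ u in {u | gHat u ≤ 0}, p u) / Real.sqrt (N : ℝ))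
            * Real.sqrt ((∫ u, (Set.indicator {u | gHat u ≤ 0} (fun v => p v) u
                  / (∫ v in {v | gHat v ≤ 0}, p v)) ^ 2 / q u) - 1) := by
  have hpInt : Integrable p volume := by
    by_contra h
    rw [integral_undef h] at hp1
    norm_num at hp1
  have hqInt : Integrable q volume := by
    by_contra h
    rw [integral_undef h] at hq1
    norm_num at hq1
  have hbias := bias_bound volume p q g gHat hq hg hgHat hp0 hq0 hpInt hqInt Cinf hCinf
    hbound Cm κ τ₀ hCm hκ hτ₀ hmargin hIntErr hεpos hετ₀
  have hmc := mc_bound volume p q gHat hp hq hgHat hp0 hq0 hpInt hqInt hq1 hbound hCinf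
    hP hInt2 N hN Ω' P U hUmeas hiid hlaw
  set A : Set (Fin d → ℝ) := {u | gHat u ≤ 0} with hA
  have hAm : MeasurableSet A := measurableSet_le hgHat measurable_const
  set ν : Measure (Fin d → ℝ) := volume.withDensity fun u => ENNReal.ofReal (q u) with hν
  set f : (Fin d → ℝ) → ℝ := A.indicator (fun u => p u / q u) with hf
  have hfm : Measurable f := (hp.div hq).indicator hAm
  set Phat : ℝ := ∫ u in A, p u with hPhat
  set PF : ℝ := ∫ u in {u | g u ≤ 0}, p u with hPF
  -- integrability of the estimator
  have hνfin : IsFiniteMeasure ν := by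
    refine isFiniteMeasure_withDensity ?_
    rw [← ofReal_integral_eq_lintegral_ofReal hqInt (ae_of_all _ hq0)]
    exact ENNReal.ofReal_ne_top
  have habscont : ν ≪ volume := withDensity_absolutelyContinuous _ _
  have hfb : ∀ᵐ u ∂ν, ‖f u‖ ≤ Cinf := by
    filter_upwards [habscont.ae_le hbound] with u hu
    rw [hf, Real.norm_eq_abs]
    by_cases hmem : u ∈ A
    · rw [Set.indicator_of_mem hmem, abs_of_nonneg (div_nonneg (hp0 u) (hq0 u))]
      rcases eq_or_lt_of_le (hq0 u) with h0 | h0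
      · rw [← h0, div_zero]; exact hCinf.le
      · rw [div_le_iff₀ h0]; exact hu
    · rw [Set.indicator_of_notMem hmem, abs_zero]; exact hCinf.le
  have hfInt : Integrable f ν :=
    Integrable.mono' (integrable_const Cinf) hfm.aestronglyMeasurable hfb
  have hXint : ∀ i, Integrable (fun ω => f (U i ω)) P := by
    intro i
    have := (integrable_map_measure hfm.aestronglyMeasurable
      (hUmeas i).aemeasurable (μ := P)).1 (by rw [hlaw i]; exact hfInt)
    exact this
  have hZint : Integrable (fun ω => (1 / (N : ℝ)) * ∑ i : Fin N, f (U i ω) - Phat) P :=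
    ((integrable_finset_sum _ fun i _ => hXint i).const_mul _).sub (integrable_const _)
  have hptwise : ∀ ω, |(1 / (N : ℝ)) * ∑ i : Fin N, f (U i ω) - PF|
      ≤ |(1 / (N : ℝ)) * ∑ i : Fin N, f (U i ω) - Phat| + |Phat - PF| :=
    fun ω => abs_sub_le _ _ _
  calc (∫ ω, |(1 / (N : ℝ)) * ∑ i : Fin N, f (U i ω) - PF| ∂P)
      ≤ ∫ ω, (|(1 / (N : ℝ)) * ∑ i : Fin N, f (U i ω) - Phat| + |Phat - PF|) ∂P := by
        refine integral_mono_of_nonneg (ae_of_all _ fun ω => abs_nonneg _)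
          (hZint.abs.add (integrable_const _)) (ae_of_all _ hptwise)
    _ = (∫ ω, |(1 / (N : ℝ)) * ∑ i : Fin N, f (U i ω) - Phat| ∂P) + |Phat - PF| := by
        rw [integral_add hZint.abs (integrable_const _), integral_const]
        simp
    _ ≤ ((∫ u in A, p u) / Real.sqrt (N : ℝ))
            * Real.sqrt ((∫ u, (A.indicator (fun v => p v) u
                  / (∫ v in A, p v)) ^ 2 / q u) - 1)
        + Cinf * (Cm + 1) * (Real.sqrt (∫ u, (g u - gHat u) ^ 2 ∂ν)) ^ (2 * κ / (κ + 2)) :=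
        add_le_add hmc hbias
    _ = _ := by ring
end
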